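/- Consider the general damped system with a real symmetric m×m matrix A having nonnegative entries. If the spectral radius of A is equal to 1, then every solution (v_n) satisfies lim_{n→∞} ‖v_n − A v_{n−k}‖ = 0. -/

import Mathlib

open Matrix Filter

/-- The Euclidean norm on `ℝ^m`. -/
noncomputable def euclNorm {m : ℕ} (w : Fin m → ℝ) : ℝ :=
  Real.sqrt (∑ i, (w i) ^ 2)

lemma euclNorm_eq {m : ℕ} (w : Fin m → ℝ) :
    euclNorm w = ‖(WithLp.equiv 2 (Fin m → ℝ)).symm w‖ := by
  rw [EuclideanSpace.norm_eq, euclNorm]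
  congr 1
  refine Finset.sum_congr rfl fun i _ => ?_
  rw [Real.norm_eq_abs, sq_abs]
  rfl

lemma contraction {m : ℕ} (A : Matrix (Fin m) (Fin m) ℝ) (hsymm : A.IsSymm)
    (hρ : spectralRadius ℝ A = 1) (w : Fin m → ℝ) :
    euclNorm (A *ᵥ w) ≤ euclNorm w := by
  have hA : A.IsHermitian := by
    rwa [Matrix.IsHermitian, Matrix.conjTranspose_eq_transpose_of_trivial]
  have hlam : ∀ i, |hA.eigenvalues i| ≤ 1 := by
    intro i
    have hmem := hA.eigenvalues_mem_spectrum_real i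
    have h1 : (‖hA.eigenvalues i‖₊ : ENNReal) ≤ spectralRadius ℝ A :=
      le_iSup₂ (f := fun k (_ : k ∈ spectrum ℝ A) => (‖k‖₊ : ENNReal)) _ hmem
    rw [hρ] at h1
    have h2 : ‖hA.eigenvalues i‖ ≤ 1 := by exact_mod_cast h1
    rwa [Real.norm_eq_abs] at h2
  set b := hA.eigenvectorBasis with hb
  set x : EuclideanSpace ℝ (Fin m) := (WithLp.equiv 2 (Fin m → ℝ)).symm w with hx
  set T := Matrix.toEuclideanLin A with hTdef
  have hy : (WithLp.equiv 2 (Fin m → ℝ)).symm (A *ᵥ w) = T x := by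
    rw [hTdef, hx]
    rfl
  rw [euclNorm_eq, euclNorm_eq, hy]
  have hS : (Matrix.toEuclideanLin A).IsSymmetric :=
    Matrix.isHermitian_iff_isSymmetric.1 hA
  have hTb : ∀ i, T (b i) = hA.eigenvalues i • b i := by
    intro i
    apply (WithLp.equiv 2 (Fin m → ℝ)).injective
    rw [hTdef]
    exact hA.mulVec_eigenvectorBasis i
  have hrepr : ∀ i, b.repr (T x) i = hA.eigenvalues i * b.repr x i := by
    intro i
    rw [b.repr_apply_apply, b.repr_apply_apply]
    calc inner ℝ (b i) (T x) = inner ℝ (T (b i)) x := (hS (b i) x).symm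
    _ = hA.eigenvalues i * inner ℝ (b i) x := by rw [hTb i, real_inner_smul_left]
  rw [← b.repr.norm_map (T x), ← b.repr.norm_map x, EuclideanSpace.norm_eq,
    EuclideanSpace.norm_eq]
  apply Real.sqrt_le_sqrt
  apply Finset.sum_le_sum
  intro i _
  rw [hrepr i]
  simp only [Real.norm_eq_abs, sq_abs, mul_pow]
  calc hA.eigenvalues i ^ 2 * b.repr x i ^ 2 ≤ 1 * b.repr x i ^ 2 := by
        exact mul_le_mul_of_nonneg_right ((sq_le_one_iff_abs_le_one (a := hA.eigenvalues i)).2 (hlam i)) (sq_nonneg _)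
  _ = b.repr x i ^ 2 := one_mul _

/-- General damped system: `v : ℕ → [0,∞)^m` with
`0 ≤ v_{n,i} ≤ (A v_{n−k})_i` for all `n ≥ k`, where `A` is real symmetric with
nonnegative entries. If the spectral radius of `A` equals `1`, then every solution
satisfies `lim_{n→∞} ‖v_n − A v_{n−k}‖ = 0` (Euclidean norm). -/
theorem stmt_5 {m k : ℕ} (hm : 1 ≤ m) (hk : 2 ≤ k)
    (A : Matrix (Fin m) (Fin m) ℝ) (hsymm : A.IsSymm) (hnnA : ∀ i j, 0 ≤ A i j)
    (hρ : spectralRadius ℝ A = 1)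
    (v : ℕ → Fin m → ℝ) (hnn : ∀ n i, 0 ≤ v n i)
    (hrec : ∀ n, k ≤ n → ∀ i, v n i ≤ (A *ᵥ v (n - k)) i) :
    Tendsto (fun n => euclNorm (v (n + k) - A *ᵥ v n)) atTop (nhds 0) := by

  -- reformulated recurrence
  have hrec' : ∀ n i, v (n + k) i ≤ (A *ᵥ v n) i := by
    intro n i
    have := hrec (n + k) (Nat.le_add_left k n) i
    rwa [Nat.add_sub_cancel] at this
  set g : ℕ → ℝ := fun n => ∑ i, (v n i) ^ 2 with hg
  have hg0 : ∀ n, 0 ≤ g n := fun n => Finset.sum_nonneg fun i _ => sq_nonneg _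
  -- sum of squares of A *ᵥ v n is ≤ g n
  have hAg : ∀ n, ∑ i, ((A *ᵥ v n) i) ^ 2 ≤ g n := by
    intro n
    have h := contraction A hsymm hρ (v n)
    have h1 : 0 ≤ ∑ i, ((A *ᵥ v n) i) ^ 2 := Finset.sum_nonneg fun i _ => sq_nonneg _
    calc ∑ i, ((A *ᵥ v n) i) ^ 2 = euclNorm (A *ᵥ v n) ^ 2 :=
          (Real.sq_sqrt h1).symm
      _ ≤ euclNorm (v n) ^ 2 := by
          apply pow_le_pow_left₀ (Real.sqrt_nonneg _) h
      _ = g n := Real.sq_sqrt (hg0 n)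
  -- key pointwise estimate
  have hkey : ∀ n, euclNorm (v (n + k) - A *ᵥ v n) ^ 2 ≤ g n - g (n + k) := by
    intro n
    have h1 : 0 ≤ ∑ i, ((v (n + k) - A *ᵥ v n) i) ^ 2 :=
      Finset.sum_nonneg fun i _ => sq_nonneg _
    rw [euclNorm, Real.sq_sqrt h1]
    have h2 : ∑ i, ((v (n + k) - A *ᵥ v n) i) ^ 2 + g (n + k)
        ≤ ∑ i, ((A *ᵥ v n) i) ^ 2 := by
      rw [hg, ← Finset.sum_add_distrib]
      apply Finset.sum_le_sum
      intro i _
      have hu := hrec' n i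
      have h0 := hnn (n + k) i
      simp only [Pi.sub_apply]
      nlinarith
    have := hAg n
    linarith
  have hd0 : ∀ n, 0 ≤ g n - g (n + k) := fun n =>
    le_trans (sq_nonneg _) (hkey n)
  -- the differences are summable
  have hsum : Summable (fun n => g n - g (n + k)) := by
    apply summable_of_sum_range_le (c := ∑ j ∈ Finset.range k, g j) hd0
    intro N
    rw [Finset.sum_sub_distrib]
    have hshift : ∑ n ∈ Finset.range N, g (n + k)
        = ∑ n ∈ Finset.range (k + N), g n - ∑ n ∈ Finset.range k, g n := by
      rw [Finset.sum_range_add]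
      simp only [add_comm k]
      ring
    rw [hshift]
    have hmono : ∑ n ∈ Finset.range N, g n ≤ ∑ n ∈ Finset.range (k + N), g n :=
      Finset.sum_le_sum_of_subset_of_nonneg
        (Finset.range_subset_range.2 (Nat.le_add_left N k)) (fun i _ _ => hg0 i)
    linarith
  have hdlim : Tendsto (fun n => g n - g (n + k)) atTop (nhds 0) :=
    hsum.tendsto_atTop_zero
  -- squeeze
  have hsqrt : Tendsto (fun n => Real.sqrt (g n - g (n + k))) atTop (nhds 0) := by
    have := (Real.continuous_sqrt.tendsto 0).comp hdlim
    simpa [Function.comp_def] using this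
  apply squeeze_zero (fun n => Real.sqrt_nonneg _) _ hsqrt
  intro n
  have h := hkey n
  calc euclNorm (v (n + k) - A *ᵥ v n)
      = Real.sqrt (euclNorm (v (n + k) - A *ᵥ v n) ^ 2) :=
        (Real.sqrt_sq (Real.sqrt_nonneg _)).symm
    _ ≤ Real.sqrt (g n - g (n + k)) := Real.sqrt_le_sqrt h
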